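/- The free group F₂ on two generators embeds into the free product C₂ * C₃ = ⟨x, y | x² = y³ = 1⟩: the subgroup generated by the commutators [x,y] = x⁻¹y⁻¹xy and [x,y⁻¹] = x⁻¹yxy⁻¹ is free of rank 2. -/

import Mathlib

/-- The modular group `C₂ * C₃ = ⟨x, y | x² = y³ = 1⟩`. -/
abbrev ModGrp : Type := Monoid.Coprod (Multiplicative (ZMod 2)) (Multiplicative (ZMod 3))

/-- The order-2 generator `x` of `C₂ * C₃`. -/
def modX : ModGrp := Monoid.Coprod.inl (Multiplicative.ofAdd (1 : ZMod 2))

/-- The order-3 generator `y` of `C₂ * C₃`. -/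
def modY : ModGrp := Monoid.Coprod.inr (Multiplicative.ofAdd (1 : ZMod 3))

/-! ### Auxiliary: reduced words for the ping-pong action -/

/-- Letters: `x`, or `y^1` (`yy false`) / `y²` (`yy true`). -/
inductive PPL where
  | xx : PPL
  | yy : Bool → PPL
deriving DecidableEq

def PPL.isX : PPL → Bool
  | .xx => true
  | .yy _ => false

/-- Alternating (reduced) words. -/
def PPW : Type := {l : List PPL // l.Chain' (fun a b => a.isX ≠ b.isX)}

def fxl : List PPL → List PPL
  | [] => [.xx]
  | .xx :: t => t
  | .yy b :: t => .xx :: .yy b :: t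

def fyl : List PPL → List PPL
  | [] => [.yy false]
  | .xx :: t => .yy false :: .xx :: t
  | .yy false :: t => .yy true :: t
  | .yy true :: t => t

theorem fxl_chain {l : List PPL} (h : l.Chain' (fun a b => a.isX ≠ b.isX)) :
    (fxl l).Chain' (fun a b => a.isX ≠ b.isX) := by
  match l with
  | [] => simp [fxl, List.Chain']
  | .xx :: t => exact h.tail
  | .yy b :: t => simpa [fxl, List.Chain', List.isChain_cons_cons, PPL.isX] using h

theorem fyl_chain {l : List PPL} (h : l.Chain' (fun a b => a.isX ≠ b.isX)) :
    (fyl l).Chain' (fun a b => a.isX ≠ b.isX) := by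
  match l with
  | [] => simp [fyl, List.Chain']
  | .xx :: t => simpa [fyl, List.Chain', List.isChain_cons_cons, PPL.isX] using h
  | .yy false :: t =>
      show (PPL.yy true :: t).Chain' _
      simp only [List.Chain', List.isChain_cons] at h ⊢
      simpa [PPL.isX] using h
  | .yy true :: t => exact h.tail

def fx (w : PPW) : PPW := ⟨fxl w.1, fxl_chain w.2⟩
def fy (w : PPW) : PPW := ⟨fyl w.1, fyl_chain w.2⟩

theorem fx_fx (w : PPW) : fx (fx w) = w := by
  obtain ⟨l, hl⟩ := w
  apply Subtype.ext
  match l with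
  | [] => rfl
  | [.xx] => rfl
  | .xx :: .xx :: t => simp [List.Chain', List.isChain_cons_cons, PPL.isX] at hl
  | .xx :: .yy b :: t => rfl
  | .yy b :: t => rfl

theorem fy_fy_fy (w : PPW) : fy (fy (fy w)) = w := by
  obtain ⟨l, hl⟩ := w
  apply Subtype.ext
  match l with
  | [] => rfl
  | .xx :: t => rfl
  | [.yy false] => rfl
  | .yy false :: .xx :: t => rfl
  | .yy false :: .yy b :: t => simp [List.Chain', List.isChain_cons_cons, PPL.isX] at hl
  | [.yy true] => rfl
  | .yy true :: .xx :: t => rfl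
  | .yy true :: .yy b :: t => simp [List.Chain', List.isChain_cons_cons, PPL.isX] at hl

/-- The involution given by `x`. -/
def px : Equiv.Perm PPW := Function.Involutive.toPerm fx fx_fx

/-- The order-3 permutation given by `y`. -/
def py : Equiv.Perm PPW :=
  ⟨fy, fy ∘ fy, fun w => fy_fy_fy w, fun w => fy_fy_fy w⟩

theorem px_sq : px ^ 2 = 1 := by
  ext w
  simp [pow_succ, px, fx_fx]
  exact fx_fx w

theorem py_cube : py ^ 3 = 1 := by
  ext w
  have h : ∀ v, py v = fy v := fun _ => rfl
  simp [pow_succ, h, fy_fy_fy]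

/-- A monoid hom from `Multiplicative (ZMod n)` out of an element of order dividing `n`. -/
def homOfOrder {M : Type*} [Monoid M] (n : ℕ) [NeZero n] (g : M) (h : g ^ n = 1) :
    Multiplicative (ZMod n) →* M where
  toFun t := g ^ (Multiplicative.toAdd t).val
  map_one' := by
    show g ^ (0 : ZMod n).val = 1
    simp
  map_mul' a b := by
    have key : ∀ m : ℕ, g ^ (m % n) = g ^ m := by
      intro m
      conv_rhs => rw [← Nat.div_add_mod m n]
      rw [pow_add, pow_mul, h, one_pow, one_mul]
    show g ^ ((Multiplicative.toAdd a + Multiplicative.toAdd b)).val = _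
    rw [ZMod.val_add, key, pow_add]

/-- The ping-pong action of `ModGrp` on reduced words. -/
def ppφ : ModGrp →* Equiv.Perm PPW :=
  Monoid.Coprod.lift (homOfOrder 2 px px_sq) (homOfOrder 3 py py_cube)

noncomputable instance : MulAction ModGrp PPW := MulAction.compHom _ ppφ

theorem modX_smul (w : PPW) : modX • w = fx w := by
  show ppφ modX w = fx w
  rw [modX, ppφ, Monoid.Coprod.lift_apply_inl]
  show (px ^ (1 : ZMod 2).val) w = fx w
  simp [ZMod.val_one, px]
  rfl

theorem modY_smul (w : PPW) : modY • w = fy w := by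
  show ppφ modY w = fy w
  rw [modY, ppφ, Monoid.Coprod.lift_apply_inr]
  show (py ^ (1 : ZMod 3).val) w = fy w
  simp [ZMod.val_one]
  rfl

theorem modX_mul_modX : modX * modX = 1 := by
  rw [modX, ← map_mul]
  have : Multiplicative.ofAdd (1 : ZMod 2) * Multiplicative.ofAdd (1 : ZMod 2) = 1 := by
    rw [← ofAdd_add]; decide
  rw [this, map_one]

theorem modY_mul_modY_mul_modY : modY * (modY * modY) = 1 := by
  rw [modY, ← map_mul, ← map_mul]
  have : Multiplicative.ofAdd (1 : ZMod 3) *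
      (Multiplicative.ofAdd (1 : ZMod 3) * Multiplicative.ofAdd (1 : ZMod 3)) = 1 := by
    rw [← ofAdd_add, ← ofAdd_add]; decide
  rw [this, map_one]

theorem modX_inv : modX⁻¹ = modX := inv_eq_of_mul_eq_one_right modX_mul_modX

theorem modY_inv : modY⁻¹ = modY * modY :=
  inv_eq_of_mul_eq_one_right modY_mul_modY_mul_modY

theorem modX_cancel (g : ModGrp) : modX * (modX * g) = g := by
  rw [← mul_assoc, modX_mul_modX, one_mul]

theorem modY_cancel (g : ModGrp) : modY * (modY * (modY * g)) = g := by
  rw [← mul_assoc, ← mul_assoc,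
    show modY * modY * modY = 1 by rw [mul_assoc]; exact modY_mul_modY_mul_modY, one_mul]

/-- The ping-pong sets. -/
def Xset (i : Bool) : Set PPW := {w | ∃ t, w.1 = PPL.xx :: PPL.yy (!i) :: t}

def Yset (i : Bool) : Set PPW := {w | ∃ t, w.1 = PPL.yy (!i) :: PPL.xx :: t}

open scoped commutatorElement

/-- The free group of rank 2 embeds in `C₂ * C₃ = ⟨x, y | x² = y³ = 1⟩`: the
homomorphism sending the two free generators to the commutators `⁅x, y⁆` and
`⁅x, y⁻¹⁆` is injective. -/
theorem free_group_embeds_C2C3 :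
    Function.Injective
      (FreeGroup.lift (fun i : Bool => if i then ⁅modX, modY⁆ else ⁅modX, modY⁻¹⁆)) := by
  set a : Bool → ModGrp := fun i : Bool => if i then ⁅modX, modY⁆ else ⁅modX, modY⁻¹⁆ with ha
  have ha_true : a true = modX * (modY * (modX * (modY * modY))) := by
    show ⁅modX, modY⁆ = _
    rw [commutatorElement_def, modX_inv, modY_inv, mul_assoc, mul_assoc]
  have ha_false : a false = modX * (modY * (modY * (modX * modY))) := by
    show ⁅modX, modY⁻¹⁆ = _
    rw [commutatorElement_def, inv_inv, modX_inv, modY_inv, mul_assoc, mul_assoc, mul_assoc]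
  have ha_true_inv : (a true)⁻¹ = modY * (modX * (modY * (modY * modX))) := by
    apply inv_eq_of_mul_eq_one_left
    rw [ha_true]
    simp only [mul_assoc, modX_cancel, modY_cancel]
    exact modY_mul_modY_mul_modY
  have ha_false_inv : (a false)⁻¹ = modY * (modY * (modX * (modY * modX))) := by
    apply inv_eq_of_mul_eq_one_left
    rw [ha_false]
    simp only [mul_assoc, modX_cancel, modY_cancel]
    exact modY_mul_modY_mul_modY
  apply FreeGroup.injective_lift_of_ping_pong a Xset Yset
  · -- nonempty
    intro i
    exact ⟨⟨[PPL.xx, PPL.yy (!i)], by simp [List.Chain', List.isChain_cons_cons, PPL.isX]⟩, ⟨[], rfl⟩⟩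
  · -- X pairwise disjoint
    intro i j hij
    rw [Function.onFun, Set.disjoint_left]
    rintro w ⟨t, ht⟩ ⟨s, hs⟩
    rw [ht] at hs
    simp at hs
    exact hij (by simpa using hs.1)
  · -- Y pairwise disjoint
    intro i j hij
    rw [Function.onFun, Set.disjoint_left]
    rintro w ⟨t, ht⟩ ⟨s, hs⟩
    rw [ht] at hs
    simp at hs
    exact hij (by simpa using hs.1)
  · -- X and Y disjoint
    intro i j
    rw [Set.disjoint_left]
    rintro w ⟨t, ht⟩ ⟨s, hs⟩
    rw [ht] at hs
    simp at hs
  · -- ping : a i • (Y i)ᶜ ⊆ X i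
    intro i
    rintro _ ⟨w, hw, rfl⟩
    obtain ⟨l, hl⟩ := w
    simp only [Set.mem_compl_iff, Yset, Set.mem_setOf_eq] at hw
    cases i
    · -- a false = x y² x y
      rw [ha_false]
      simp only [mul_smul, modX_smul, modY_smul, Xset, Set.mem_setOf_eq]
      match l, hl with
      | [], _ => exact ⟨_, rfl⟩
      | .xx :: t, _ => exact ⟨_, rfl⟩
      | .yy false :: t, _ => exact ⟨_, rfl⟩
      | [.yy true], _ => exact ⟨_, rfl⟩
      | .yy true :: .xx :: t, _ => exact absurd ⟨t, rfl⟩ hw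
      | .yy true :: .yy b :: t, hl => simp [List.Chain', List.isChain_cons_cons, PPL.isX] at hl
    · -- a true = x y x y²
      rw [ha_true]
      simp only [mul_smul, modX_smul, modY_smul, Xset, Set.mem_setOf_eq]
      match l, hl with
      | [], _ => exact ⟨_, rfl⟩
      | .xx :: t, _ => exact ⟨_, rfl⟩
      | [.yy false], _ => exact ⟨_, rfl⟩
      | .yy false :: .xx :: t, _ => exact absurd ⟨t, rfl⟩ hw
      | .yy false :: .yy b :: t, hl => simp [List.Chain', List.isChain_cons_cons, PPL.isX] at hl
      | [.yy true], _ => exact ⟨_, rfl⟩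
      | .yy true :: .xx :: t, _ => exact ⟨_, rfl⟩
      | .yy true :: .yy b :: t, hl => simp [List.Chain', List.isChain_cons_cons, PPL.isX] at hl
  · -- pong : (a i)⁻¹ • (X i)ᶜ ⊆ Y i
    intro i
    rintro _ ⟨w, hw, rfl⟩
    obtain ⟨l, hl⟩ := w
    simp only [Set.mem_compl_iff, Xset, Set.mem_setOf_eq] at hw
    cases i
    · -- (a false)⁻¹ = y² x y x
      show (a false)⁻¹ • _ ∈ _
      rw [ha_false_inv]
      simp only [mul_smul, modX_smul, modY_smul, Yset, Set.mem_setOf_eq]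
      match l, hl with
      | [], _ => exact ⟨_, rfl⟩
      | [.xx], _ => exact ⟨_, rfl⟩
      | .xx :: .yy false :: t, _ => exact ⟨_, rfl⟩
      | .xx :: .yy true :: t, _ => exact absurd ⟨t, rfl⟩ hw
      | .xx :: .xx :: t, hl => simp [List.Chain', List.isChain_cons_cons, PPL.isX] at hl
      | .yy b :: t, _ => cases b <;> exact ⟨_, rfl⟩
    · -- (a true)⁻¹ = y x y² x
      show (a true)⁻¹ • _ ∈ _
      rw [ha_true_inv]
      simp only [mul_smul, modX_smul, modY_smul, Yset, Set.mem_setOf_eq]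
      match l, hl with
      | [], _ => exact ⟨_, rfl⟩
      | [.xx], _ => exact ⟨_, rfl⟩
      | .xx :: .yy false :: t, _ => exact absurd ⟨t, rfl⟩ hw
      | [.xx, .yy true], _ => exact ⟨_, rfl⟩
      | .xx :: .yy true :: .xx :: t, _ => exact ⟨_, rfl⟩
      | .xx :: .yy true :: .yy b :: t, hl => simp [List.Chain', List.isChain_cons_cons, PPL.isX] at hl
      | .xx :: .xx :: t, hl => simp [List.Chain', List.isChain_cons_cons, PPL.isX] at hl
      | .yy b :: t, _ => cases b <;> exact ⟨_, rfl⟩
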